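/- Let {f_α : α ∈ Λ} be an orthonormal family in L²(Q) with f_0 = 1, and suppose A := ∑_{α ∈ Λ} (E_{P'}[f_α])² < ∞ (note E_{P'}[f_0] = 1). For M ≥ 1, let Q̄ = Q^{⊗M} and P̄ = (1/M)∑_{i=1}^M P_i where P_i equals P' in coordinate i and Q elsewhere. For a tuple (α_1, ..., α_M) ∈ Λ^M, the expectation E_{P̄}[∏_{i=1}^M f_{α_i}(Y_i)] equals 1 if all α_i = 0; equals (1/M) E_{P'}[f_{α_j}] if exactly one index j has α_j ≠ 0; and equals 0 otherwise. Consequently, ∑ over all tuples of (E_{P̄}[∏_i f_{α_i}(Y_i)])² ≤ 1 + A/M. -/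

import Mathlib

open MeasureTheory
open scoped ENNReal

instance iteSigmaFinite {Ω : Type*} [MeasurableSpace Ω] (P Q : Measure Ω)
    [SigmaFinite P] [SigmaFinite Q] (p : Prop) [Decidable p] :
    SigmaFinite (if p then P else Q) := by
  split <;> infer_instance

/-- The hidden informative sample mixture `P̄ = (1/M) ∑_i P_i`, where `P_i` equals `P'`
in coordinate `i` and `Q` elsewhere. -/
noncomputable def Pbar {Ω : Type*} [MeasurableSpace Ω] (Q P' : Measure Ω)
    [SigmaFinite Q] [SigmaFinite P'] (M : ℕ) : Measure (Fin M → Ω) :=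
  (M : ℝ≥0∞)⁻¹ • ∑ i : Fin M, Measure.pi fun j : Fin M => if j = i then P' else Q

lemma integral_pi_prod {Ω : Type*} [m0 : MeasurableSpace Ω] {M : ℕ} (μ : Fin M → Measure Ω)
    (hσ : ∀ i, SigmaFinite (μ i)) (g : Fin M → Ω → ℝ) :
    ∫ y : Fin M → Ω, ∏ j, g j (y j) ∂(Measure.pi μ) = ∏ j, ∫ ω, g j ω ∂(μ j) :=
  by haveI := hσ; exact MeasureTheory.integral_fintype_prod_eq_prod (E := fun _ => Ω) g

lemma integrable_pi_prod {Ω : Type*} [m0 : MeasurableSpace Ω] {M : ℕ} (μ : Fin M → Measure Ω)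
    (hσ : ∀ i, SigmaFinite (μ i)) (g : Fin M → Ω → ℝ) (hg : ∀ i, Integrable (g i) (μ i)) :
    Integrable (fun y : Fin M → Ω => ∏ j, g j (y j)) (Measure.pi μ) :=
  by haveI := hσ; exact MeasureTheory.Integrable.fintype_prod_dep (E := fun _ => Ω) (f := g) hg

/-- Moments of products of orthonormal basis functions under the hidden informative
sample mixture: `E_{P̄}[∏_i f_{α_i}(Y_i)]` equals `1` if all `α_i = α₀`; equals
`(1/M) E_{P'}[f_{α_j}]` if exactly one index `j` has `α_j ≠ α₀`; and equals `0`
otherwise. Consequently the sum of squared moments is at most `1 + A/M` with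
`A = ∑_α (E_{P'}[f_α])²`. -/
theorem hidden_sample_moments {Ω Λ : Type*} [MeasurableSpace Ω]
    [Fintype Λ] [DecidableEq Λ]
    (Q P' : Measure Ω) [IsProbabilityMeasure Q] [IsProbabilityMeasure P']
    (hac : P' ≪ Q)
    (f : Λ → Ω → ℝ) (α₀ : Λ) (hf0 : ∀ ω, f α₀ ω = 1)
    (horth : ∀ α β, ∫ ω, f α ω * f β ω ∂Q = if α = β then 1 else 0)
    (hIntP : ∀ α, Integrable (f α) P')
    (hIntQ : ∀ α, Integrable (f α) Q)
    (hIntQ2 : ∀ α β, Integrable (fun ω => f α ω * f β ω) Q)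
    (M : ℕ) (hM : 0 < M) :
    (∀ αv : Fin M → Λ,
      ((∀ i, αv i = α₀) →
        ∫ y, (∏ i, f (αv i) (y i)) ∂(Pbar Q P' M) = 1) ∧
      (∀ j, αv j ≠ α₀ → (∀ i, i ≠ j → αv i = α₀) →
        ∫ y, (∏ i, f (αv i) (y i)) ∂(Pbar Q P' M)
          = (1 / (M : ℝ)) * ∫ ω, f (αv j) ω ∂P') ∧
      ((∃ i j, i ≠ j ∧ αv i ≠ α₀ ∧ αv j ≠ α₀) →
        ∫ y, (∏ i, f (αv i) (y i)) ∂(Pbar Q P' M) = 0)) ∧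
    (∑ αv : Fin M → Λ, (∫ y, (∏ i, f (αv i) (y i)) ∂(Pbar Q P' M)) ^ 2
        ≤ 1 + (∑ α, (∫ ω, f α ω ∂P') ^ 2) / (M : ℝ)) := by
  classical
  have hMR : (0 : ℝ) < (M : ℝ) := by exact_mod_cast hM
  set a : Λ → ℝ := fun α => ∫ ω, f α ω ∂P' with ha
  have hQint : ∀ α, ∫ ω, f α ω ∂Q = if α = α₀ then 1 else 0 := by
    intro α
    have := horth α α₀
    simpa [hf0] using this
  have ha0 : a α₀ = 1 := by simp [ha, hf0]
  set μ : Fin M → Fin M → Measure Ω := fun i j => if j = i then P' else Q with hμ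
  have hσ : ∀ i j, SigmaFinite (μ i j) := fun i j => by
    simp only [hμ]; infer_instance
  have hint : ∀ (αv : Fin M → Λ) (i : Fin M),
      Integrable (fun y : Fin M → Ω => ∏ j, f (αv j) (y j)) (Measure.pi (μ i)) := by
    intro αv i
    refine integrable_pi_prod (μ i) (hσ i) _ (fun j => ?_)
    by_cases h : j = i <;> simp [hμ, h, hIntP, hIntQ]
  have key : ∀ (αv : Fin M → Λ) (i : Fin M),
      (∏ j, ∫ ω, f (αv j) ω ∂(μ i j)) =
        if ∀ j, j ≠ i → αv j = α₀ then a (αv i) else 0 := by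
    intro αv i
    by_cases h : ∀ j, j ≠ i → αv j = α₀
    · rw [if_pos h, Finset.prod_eq_single i]
      · simp [hμ, ha]
      · intro j _ hj
        simp only [hμ, if_neg hj]
        rw [hQint, if_pos (h j hj)]
      · simp
    · rw [if_neg h]
      push_neg at h
      obtain ⟨j, hji, hj⟩ := h
      refine Finset.prod_eq_zero (Finset.mem_univ j) ?_
      simp only [hμ, if_neg hji]
      rw [hQint, if_neg hj]
  have hm : ∀ αv : Fin M → Λ,
      ∫ y, (∏ i, f (αv i) (y i)) ∂(Pbar Q P' M)
        = (M : ℝ)⁻¹ * ∑ i, (if ∀ j, j ≠ i → αv j = α₀ then a (αv i) else 0) := by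
    intro αv
    rw [Pbar, integral_smul_measure,
      integral_finset_sum_measure (fun i _ => hint αv i)]
    simp only [smul_eq_mul]
    congr 1
    · simp
    · exact Finset.sum_congr rfl fun i _ => by
        rw [integral_pi_prod (μ i) (hσ i), key]
  -- the three cases
  have h1 : ∀ αv : Fin M → Λ, (∀ i, αv i = α₀) →
      ∫ y, (∏ i, f (αv i) (y i)) ∂(Pbar Q P' M) = 1 := by
    intro αv hαv
    rw [hm]
    have : ∀ i : Fin M, (if ∀ j, j ≠ i → αv j = α₀ then a (αv i) else 0) = 1 := by
      intro i
      rw [if_pos (fun j _ => hαv j), hαv i, ha0]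
    rw [Finset.sum_congr rfl fun i _ => this i]
    simp [Finset.card_univ]
    field_simp
  have h2 : ∀ (αv : Fin M → Λ) (j : Fin M), αv j ≠ α₀ → (∀ i, i ≠ j → αv i = α₀) →
      ∫ y, (∏ i, f (αv i) (y i)) ∂(Pbar Q P' M) = (1 / (M : ℝ)) * a (αv j) := by
    intro αv j hj hrest
    rw [hm]
    rw [Finset.sum_eq_single_of_mem j (Finset.mem_univ j)]
    · rw [if_pos hrest, one_div]
    · intro i _ hij
      rw [if_neg]
      intro hcon
      exact hj (hcon j (fun h => hij h.symm))
  have h3 : ∀ αv : Fin M → Λ, (∃ i j, i ≠ j ∧ αv i ≠ α₀ ∧ αv j ≠ α₀) →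
      ∫ y, (∏ i, f (αv i) (y i)) ∂(Pbar Q P' M) = 0 := by
    intro αv ⟨i0, j0, hij, hi0, hj0⟩
    rw [hm]
    have : ∀ i : Fin M, (if ∀ j, j ≠ i → αv j = α₀ then a (αv i) else 0) = 0 := by
      intro i
      rw [if_neg]
      intro hcon
      by_cases h : i0 = i
      · exact hj0 (hcon j0 (fun hh => hij (h.trans hh.symm)))
      · exact hi0 (hcon i0 h)
    rw [Finset.sum_congr rfl fun i _ => this i]
    simp
  refine ⟨fun αv => ⟨h1 αv, fun j hj hr => h2 αv j hj hr, h3 αv⟩, ?_⟩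
  -- sum of squares bound
  set c0 : Fin M → Λ := fun _ => α₀ with hc0
  set e : Fin M × Λ → (Fin M → Λ) := fun p => Function.update c0 p.1 p.2 with he
  set s : Finset (Fin M × Λ) := Finset.univ ×ˢ Finset.univ.filter (fun β => β ≠ α₀) with hs
  set S1 : Finset (Fin M → Λ) := s.image e with hS1
  have hmem : ∀ p ∈ s, p.2 ≠ α₀ := by
    intro p hp
    simp only [hs, Finset.mem_product, Finset.mem_filter] at hp
    exact hp.2.2
  have hc0S1 : c0 ∉ S1 := by
    simp only [hS1, Finset.mem_image]
    rintro ⟨⟨j, β⟩, hp, hpe⟩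
    have := congrFun hpe j
    simp only [he, Function.update_self, hc0] at this
    exact hmem _ hp this
  have hvanish : ∀ αv : Fin M → Λ, αv ∉ insert c0 S1 →
      ∫ y, (∏ i, f (αv i) (y i)) ∂(Pbar Q P' M) = 0 := by
    intro αv hαv
    simp only [Finset.mem_insert, not_or] at hαv
    obtain ⟨hne, hnS1⟩ := hαv
    have hex : ∃ j, αv j ≠ α₀ := by
      by_contra hcon
      push_neg at hcon
      exact hne (funext fun i => hcon i)
    obtain ⟨j, hj⟩ := hex
    by_cases hrest : ∀ i, i ≠ j → αv i = α₀
    · exfalso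
      apply hnS1
      simp only [hS1, Finset.mem_image]
      refine ⟨(j, αv j), ?_, ?_⟩
      · simp [hs, hj]
      · funext i
        by_cases h : i = j
        · subst h; simp [he]
        · simp [he, Function.update_of_ne h, hc0, hrest i h]
    · push_neg at hrest
      obtain ⟨i, hij, hi⟩ := hrest
      exact h3 αv ⟨i, j, hij, hi, hj⟩
  have hinj : ∀ p ∈ s, ∀ q ∈ s, e p = e q → p = q := by
    rintro ⟨j, β⟩ hp ⟨j', β'⟩ hq hpq
    have hββ' : j = j' := by
      by_contra hjj
      have := congrFun hpq j
      simp only [he, Function.update_self, Function.update_of_ne hjj, hc0] at this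
      exact hmem _ hp this
    subst hββ'
    have := congrFun hpq j
    simp only [he, Function.update_self] at this
    rw [this]
  calc ∑ αv : Fin M → Λ, (∫ y, (∏ i, f (αv i) (y i)) ∂(Pbar Q P' M)) ^ 2
      = ∑ αv ∈ insert c0 S1, (∫ y, (∏ i, f (αv i) (y i)) ∂(Pbar Q P' M)) ^ 2 := by
        refine (Finset.sum_subset (Finset.subset_univ _) fun x _ hx => ?_).symm
        rw [hvanish x hx]; ring
    _ = 1 + ∑ p ∈ s, ((1 / (M : ℝ)) * a p.2) ^ 2 := by
        rw [Finset.sum_insert hc0S1, h1 c0 (fun _ => rfl), one_pow, hS1,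
          Finset.sum_image hinj]
        congr 1
        refine Finset.sum_congr rfl fun p hp => ?_
        have hβ := hmem p hp
        have := h2 (e p) p.1 (by simpa [he] using hβ) (by
          intro i hi
          simp [he, Function.update_of_ne hi, hc0])
        simp only [he, Function.update_self] at this ⊢
        rw [this]
    _ ≤ 1 + (∑ α, a α ^ 2) / (M : ℝ) := by
        gcongr 1 + ?_
        have : ∑ p ∈ s, ((1 / (M : ℝ)) * a p.2) ^ 2
            = (M : ℝ) * ∑ β ∈ Finset.univ.filter (fun β => β ≠ α₀), ((1 / (M : ℝ)) * a β) ^ 2 := by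
          rw [hs, Finset.sum_product]
          simp [Finset.card_univ]
        rw [this]
        have hle : ∑ β ∈ Finset.univ.filter (fun β => β ≠ α₀), a β ^ 2 ≤ ∑ α, a α ^ 2 :=
          Finset.sum_le_sum_of_subset_of_nonneg (Finset.filter_subset _ _)
            (fun _ _ _ => sq_nonneg _)
        have hexp : ∀ β, ((1 / (M : ℝ)) * a β) ^ 2 = (1 / (M:ℝ)^2) * a β ^ 2 := by
          intro β; field_simp
        rw [Finset.sum_congr rfl fun β _ => hexp β, ← Finset.mul_sum]
        rw [div_eq_mul_inv]
        calc (M : ℝ) * ((1 / (M:ℝ)^2) * ∑ β ∈ Finset.univ.filter (fun β => β ≠ α₀), a β ^ 2)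
            = (∑ β ∈ Finset.univ.filter (fun β => β ≠ α₀), a β ^ 2) * (M:ℝ)⁻¹ := by
              field_simp
          _ ≤ (∑ α, a α ^ 2) * (M:ℝ)⁻¹ := by
              gcongr
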